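/- Let n ≥ 1, let Σ and Q be n×n real symmetric positive definite matrices, A an n×n real matrix, m ∈ ℝⁿ, and μ ≥ 0 a real number such that Σ⁻¹ − 2μI is positive definite. Set S := (Σ⁻¹ − 2μI)⁻¹. Then A S Aᵀ + Q is positive definite and there exists a constant c > 0 such that for every x ∈ ℝⁿ: ∫_{ℝⁿ} exp(−(1/2)(x − A x')ᵀ Q⁻¹ (x − A x')) · exp(μ ‖x' − m‖²) · exp(−(1/2)(x' − m)ᵀ Σ⁻¹ (x' − m)) dx' = c · exp(−(1/2)(x − A m)ᵀ (A S Aᵀ + Q)⁻¹ (x − A m)). (This is the time-update step of the risk-sensitive filter: the predicted mean is Am and the predicted covariance is A(Σ⁻¹ − 2μI)⁻¹Aᵀ + Q.) -/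

import Mathlib

open MeasureTheory Matrix Real

private lemma rsf_dot_mulVec_left {n : ℕ} (C : Matrix (Fin n) (Fin n) ℝ) (u w : Fin n → ℝ) :
    (C *ᵥ u) ⬝ᵥ w = u ⬝ᵥ (Cᵀ *ᵥ w) := by
  rw [dotProduct_comm, dotProduct_mulVec, dotProduct_comm, Matrix.mulVec_transpose]

private lemma rsf_integrable_std_gauss (n : ℕ) :
    Integrable (fun z : Fin n → ℝ => Real.exp (-(1/2) * (z ⬝ᵥ z))) := by
  have h : ∀ z : Fin n → ℝ,
      Real.exp (-(1/2) * (z ⬝ᵥ z)) = ∏ i, Real.exp (-(1/2) * (z i) ^ 2) := by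
    intro z
    rw [← Real.exp_sum]
    congr 1
    simp only [dotProduct, Finset.mul_sum]
    congr 1; ext i; ring
  simp_rw [h]
  exact Integrable.fintype_prod (f := fun (_ : Fin n) (x : ℝ) => Real.exp (-(1/2) * x ^ 2))
    (fun _ => by simpa using integrable_exp_neg_mul_sq (by norm_num : (0:ℝ) < 1/2))

open scoped MatrixOrder in
private lemma rsf_integrable_gauss {n : ℕ} {M : Matrix (Fin n) (Fin n) ℝ} (hM : M.PosDef) :
    Integrable (fun y : Fin n → ℝ => Real.exp (-(1/2) * (y ⬝ᵥ M *ᵥ y))) := by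
  set B := CFC.sqrt M with hBdef
  have hBB : B * B = M := CFC.sqrt_mul_sqrt_self M hM.posSemidef.nonneg
  have hBH : Bᵀ = B := by
    have h := (CFC.sqrt_nonneg M).posSemidef.1
    rwa [Matrix.IsHermitian, Matrix.conjTranspose_eq_transpose_of_trivial] at h
  have hdet : B.det ≠ 0 := by
    intro h
    have h2 : M.det = 0 := by rw [← hBB, Matrix.det_mul, h, mul_zero]
    exact hM.det_pos.ne' h2
  have hpt : ∀ y : Fin n → ℝ, y ⬝ᵥ M *ᵥ y = (B *ᵥ y) ⬝ᵥ (B *ᵥ y) := by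
    intro y
    rw [rsf_dot_mulVec_left, hBH, Matrix.mulVec_mulVec, hBB]
  simp_rw [hpt]
  have hgc : Continuous (fun z : Fin n → ℝ => Real.exp (-(1/2) * (z ⬝ᵥ z))) := by
    have : (fun z : Fin n → ℝ => z ⬝ᵥ z) = fun z => ∑ i, z i * z i := rfl
    exact Real.continuous_exp.comp (continuous_const.mul
      (this ▸ continuous_finset_sum _ fun i _ => (continuous_apply i).mul (continuous_apply i)))
  have hsm : Integrable (fun z : Fin n → ℝ => Real.exp (-(1/2) * (z ⬝ᵥ z)))
      (ENNReal.ofReal |B.det⁻¹| • volume) :=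
    (rsf_integrable_std_gauss n).smul_measure ENNReal.ofReal_ne_top
  rw [← Real.map_matrix_volume_pi_eq_smul_volume_pi hdet] at hsm
  have hlin : Continuous (⇑(Matrix.toLin' B)) := LinearMap.continuous_of_finiteDimensional _
  have := (integrable_map_measure hgc.aestronglyMeasurable hlin.measurable.aemeasurable).mp hsm
  simpa [Function.comp_def, Matrix.toLin'_apply] using this

private lemma rsf_gauss_pos {n : ℕ} {M : Matrix (Fin n) (Fin n) ℝ} (hM : M.PosDef) :
    0 < ∫ y : Fin n → ℝ, Real.exp (-(1/2) * (y ⬝ᵥ M *ᵥ y)) := by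
  rw [integral_pos_iff_support_of_nonneg (fun y => (Real.exp_pos _).le)
    (rsf_integrable_gauss hM)]
  have h : Function.support (fun y : Fin n → ℝ => Real.exp (-(1/2) * (y ⬝ᵥ M *ᵥ y)))
      = Set.univ := by
    ext y; simp [Function.mem_support, (Real.exp_pos _).ne']
  rw [h]
  exact isOpen_univ.measure_pos volume Set.univ_nonempty

private lemma rsf_gauss_shift {n : ℕ} {M : Matrix (Fin n) (Fin n) ℝ} (hM : M.PosDef)
    (hMs : Mᵀ = M) (b : Fin n → ℝ) :
    ∫ y : Fin n → ℝ, Real.exp (-(1/2) * (y ⬝ᵥ M *ᵥ y) + b ⬝ᵥ y)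
      = (∫ y : Fin n → ℝ, Real.exp (-(1/2) * (y ⬝ᵥ M *ᵥ y)))
          * Real.exp ((1/2) * (b ⬝ᵥ M⁻¹ *ᵥ b)) := by
  have hdet : IsUnit M.det := (Matrix.isUnit_iff_isUnit_det M).mp hM.isUnit
  set a := M⁻¹ *ᵥ b with ha
  have hMa : M *ᵥ a = b := by
    rw [ha, Matrix.mulVec_mulVec, Matrix.mul_nonsing_inv _ hdet, Matrix.one_mulVec]
  have key : ∀ y : Fin n → ℝ,
      (1/2) * (b ⬝ᵥ M⁻¹ *ᵥ b) + (-(1/2) * ((y - a) ⬝ᵥ M *ᵥ (y - a)))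
        = -(1/2) * (y ⬝ᵥ M *ᵥ y) + b ⬝ᵥ y := by
    intro y
    have h1 : a ⬝ᵥ M *ᵥ y = b ⬝ᵥ y := by
      rw [ha, rsf_dot_mulVec_left, Matrix.transpose_nonsing_inv, hMs, Matrix.mulVec_mulVec,
        Matrix.nonsing_inv_mul _ hdet, Matrix.one_mulVec]
    have h2 : y ⬝ᵥ M *ᵥ a = b ⬝ᵥ y := by rw [hMa, dotProduct_comm]
    have h3 : a ⬝ᵥ M *ᵥ a = b ⬝ᵥ M⁻¹ *ᵥ b := by rw [hMa, ha, dotProduct_comm]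
    rw [Matrix.mulVec_sub, sub_dotProduct, dotProduct_sub, dotProduct_sub,
      h1, h2, h3]
    ring
  calc ∫ y : Fin n → ℝ, Real.exp (-(1/2) * (y ⬝ᵥ M *ᵥ y) + b ⬝ᵥ y)
      = ∫ y : Fin n → ℝ, Real.exp ((1/2) * (b ⬝ᵥ M⁻¹ *ᵥ b))
          * Real.exp (-(1/2) * ((y - a) ⬝ᵥ M *ᵥ (y - a))) := by
        congr 1; funext y; rw [← Real.exp_add, key y]
    _ = Real.exp ((1/2) * (b ⬝ᵥ M⁻¹ *ᵥ b))
          * ∫ y : Fin n → ℝ, Real.exp (-(1/2) * ((y - a) ⬝ᵥ M *ᵥ (y - a))) :=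
        integral_const_mul _ _
    _ = Real.exp ((1/2) * (b ⬝ᵥ M⁻¹ *ᵥ b))
          * ∫ y : Fin n → ℝ, Real.exp (-(1/2) * (y ⬝ᵥ M *ᵥ y)) := by
        rw [integral_sub_right_eq_self (fun y => Real.exp (-(1/2) * (y ⬝ᵥ M *ᵥ y))) a]
    _ = _ := mul_comm _ _

private lemma rsf_woodbury {n : ℕ} (A T R : Matrix (Fin n) (Fin n) ℝ)
    (hT : IsUnit T.det) (hR : IsUnit R.det) (hM : IsUnit (Aᵀ * R * A + T).det) :
    (A * T⁻¹ * Aᵀ + R⁻¹)⁻¹ = R - R * A * (Aᵀ * R * A + T)⁻¹ * (Aᵀ * R) := by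
  apply Matrix.inv_eq_right_inv
  set M := Aᵀ * R * A + T with hMdef
  have h1 : T⁻¹ * T = 1 := Matrix.nonsing_inv_mul _ hT
  have h2 : M * M⁻¹ = 1 := Matrix.mul_nonsing_inv _ hM
  have h3 : R⁻¹ * R = 1 := Matrix.nonsing_inv_mul _ hR
  have key : T⁻¹ * (Aᵀ * R * A) * M⁻¹ = T⁻¹ - M⁻¹ := by
    have hA : Aᵀ * R * A = M - T := eq_sub_of_add_eq hMdef.symm
    rw [hA, mul_sub, sub_mul, mul_assoc T⁻¹ M M⁻¹, h2, mul_one, h1, one_mul]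
  calc (A * T⁻¹ * Aᵀ + R⁻¹) * (R - R * A * M⁻¹ * (Aᵀ * R))
      = A * T⁻¹ * Aᵀ * R - A * (T⁻¹ * (Aᵀ * R * A) * M⁻¹) * (Aᵀ * R)
          + (R⁻¹ * R - R⁻¹ * R * (A * M⁻¹ * (Aᵀ * R))) := by noncomm_ring
    _ = 1 := by rw [key, h3]; noncomm_ring

/-- Time-update step of the risk-sensitive filter.
`x ⬝ᵥ x` is the squared Euclidean norm `‖x‖²`. -/
theorem risk_sensitive_time_update (n : ℕ) (hn : 1 ≤ n)
    (Sig Q A : Matrix (Fin n) (Fin n) ℝ) (m : Fin n → ℝ) (μ : ℝ) (hμ : 0 ≤ μ)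
    (hSig : Sig.PosDef) (hSigSymm : Sig.IsSymm)
    (hQ : Q.PosDef) (hQSymm : Q.IsSymm)
    (hpd : (Sig⁻¹ - (2 * μ) • (1 : Matrix (Fin n) (Fin n) ℝ)).PosDef) :
    (A * (Sig⁻¹ - (2 * μ) • (1 : Matrix (Fin n) (Fin n) ℝ))⁻¹ * Aᵀ + Q).PosDef ∧
    ∃ c : ℝ, 0 < c ∧ ∀ x : Fin n → ℝ,
      (∫ x' : Fin n → ℝ,
          Real.exp (-(1/2) * ((x - A.mulVec x') ⬝ᵥ Q⁻¹.mulVec (x - A.mulVec x'))) *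
          Real.exp (μ * ((x' - m) ⬝ᵥ (x' - m))) *
          Real.exp (-(1/2) * ((x' - m) ⬝ᵥ Sig⁻¹.mulVec (x' - m))))
        = c * Real.exp (-(1/2) * ((x - A.mulVec m) ⬝ᵥ
            (A * (Sig⁻¹ - (2 * μ) • (1 : Matrix (Fin n) (Fin n) ℝ))⁻¹ * Aᵀ + Q)⁻¹.mulVec
            (x - A.mulVec m))) := by
  set T : Matrix (Fin n) (Fin n) ℝ := Sig⁻¹ - (2 * μ) • 1 with hTdef
  set R : Matrix (Fin n) (Fin n) ℝ := Q⁻¹ with hRdef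
  have hT : T.PosDef := hpd
  have hQdet : IsUnit Q.det := (Matrix.isUnit_iff_isUnit_det Q).mp hQ.isUnit
  have hR : R.PosDef := hQ.inv
  have hRs : Rᵀ = R := by rw [hRdef, Matrix.transpose_nonsing_inv, hQSymm.eq]
  have hSiginv_s : (Sig⁻¹)ᵀ = Sig⁻¹ := by rw [Matrix.transpose_nonsing_inv, hSigSymm.eq]
  have hTs : Tᵀ = T := by
    rw [hTdef, Matrix.transpose_sub, hSiginv_s, Matrix.transpose_smul, Matrix.transpose_one]
  have hAH : Aᵀᴴ = A := by
    rw [Matrix.conjTranspose_eq_transpose_of_trivial, Matrix.transpose_transpose]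
  have hAH2 : Aᴴ = Aᵀ := Matrix.conjTranspose_eq_transpose_of_trivial A
  set M : Matrix (Fin n) (Fin n) ℝ := Aᵀ * R * A + T with hMdef
  have hMpos : M.PosDef := by
    have h := hR.posSemidef.mul_mul_conjTranspose_same Aᵀ
    rw [hAH] at h
    exact Matrix.PosDef.posSemidef_add h hT
  have hMs : Mᵀ = M := by
    rw [hMdef, Matrix.transpose_add, Matrix.transpose_mul, Matrix.transpose_mul, hRs,
      Matrix.transpose_transpose, hTs, Matrix.mul_assoc]
  have hTdet : IsUnit T.det := (Matrix.isUnit_iff_isUnit_det T).mp hT.isUnit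
  have hRdet : IsUnit R.det := (Matrix.isUnit_iff_isUnit_det R).mp hR.isUnit
  have hMdet : IsUnit M.det := (Matrix.isUnit_iff_isUnit_det M).mp hMpos.isUnit
  have hPpos : (A * T⁻¹ * Aᵀ + Q).PosDef := by
    have h := hT.inv.posSemidef.mul_mul_conjTranspose_same A
    rw [hAH2] at h
    exact Matrix.PosDef.posSemidef_add h hQ
  refine ⟨hPpos, ?_⟩
  have hQR : Q = R⁻¹ := by rw [hRdef, Matrix.nonsing_inv_nonsing_inv Q hQdet]
  have hwood : (A * T⁻¹ * Aᵀ + Q)⁻¹ = R - R * A * M⁻¹ * (Aᵀ * R) := by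
    rw [hQR, rsf_woodbury A T R hTdet hRdet hMdet, hMdef]
  refine ⟨∫ y : Fin n → ℝ, Real.exp (-(1/2) * (y ⬝ᵥ M *ᵥ y)), rsf_gauss_pos hMpos, ?_⟩
  intro x
  set u : Fin n → ℝ := x - A *ᵥ m with hu
  set b : Fin n → ℝ := (Aᵀ * R) *ᵥ u with hb
  have e3 : b ⬝ᵥ M⁻¹ *ᵥ b = u ⬝ᵥ (R * A * M⁻¹ * (Aᵀ * R)) *ᵥ u := by
    rw [hb, rsf_dot_mulVec_left, Matrix.transpose_mul, hRs, Matrix.transpose_transpose,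
      Matrix.mulVec_mulVec, Matrix.mulVec_mulVec]
  have e4 : u ⬝ᵥ (A * T⁻¹ * Aᵀ + Q)⁻¹ *ᵥ u
      = u ⬝ᵥ R *ᵥ u - u ⬝ᵥ (R * A * M⁻¹ * (Aᵀ * R)) *ᵥ u := by
    rw [hwood, Matrix.sub_mulVec, dotProduct_sub]
  calc (∫ x' : Fin n → ℝ,
          Real.exp (-(1/2) * ((x - A *ᵥ x') ⬝ᵥ R *ᵥ (x - A *ᵥ x'))) *
          Real.exp (μ * ((x' - m) ⬝ᵥ (x' - m))) *
          Real.exp (-(1/2) * ((x' - m) ⬝ᵥ Sig⁻¹ *ᵥ (x' - m))))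
      = ∫ x' : Fin n → ℝ,
          Real.exp (-(1/2) * ((x - A *ᵥ x') ⬝ᵥ R *ᵥ (x - A *ᵥ x'))
            + μ * ((x' - m) ⬝ᵥ (x' - m)) + -(1/2) * ((x' - m) ⬝ᵥ Sig⁻¹ *ᵥ (x' - m))) := by
        congr 1; funext x'; rw [← Real.exp_add, ← Real.exp_add]
    _ = ∫ y : Fin n → ℝ,
          Real.exp (-(1/2) * ((x - A *ᵥ (y + m)) ⬝ᵥ R *ᵥ (x - A *ᵥ (y + m)))
            + μ * (((y + m) - m) ⬝ᵥ ((y + m) - m))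
            + -(1/2) * (((y + m) - m) ⬝ᵥ Sig⁻¹ *ᵥ ((y + m) - m))) :=
        (integral_add_right_eq_self (fun x' : Fin n → ℝ =>
          Real.exp (-(1/2) * ((x - A *ᵥ x') ⬝ᵥ R *ᵥ (x - A *ᵥ x'))
            + μ * ((x' - m) ⬝ᵥ (x' - m)) + -(1/2) * ((x' - m) ⬝ᵥ Sig⁻¹ *ᵥ (x' - m)))) m).symm
    _ = ∫ y : Fin n → ℝ,
          Real.exp (-(1/2) * (u ⬝ᵥ R *ᵥ u))
            * Real.exp (-(1/2) * (y ⬝ᵥ M *ᵥ y) + b ⬝ᵥ y) := by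
        congr 1; funext y
        rw [← Real.exp_add]
        congr 1
        have hyy : (y + m) - m = y := add_sub_cancel_right y m
        have hxy : x - A *ᵥ (y + m) = u - A *ᵥ y := by
          rw [Matrix.mulVec_add, hu]; abel
        rw [hyy, hxy]
        have h1' : u ⬝ᵥ R *ᵥ (A *ᵥ y) = b ⬝ᵥ y := by
          rw [hb, rsf_dot_mulVec_left, Matrix.transpose_mul, hRs, Matrix.transpose_transpose,
            Matrix.mulVec_mulVec]
        have h2' : (A *ᵥ y) ⬝ᵥ R *ᵥ u = b ⬝ᵥ y := by
          rw [rsf_dot_mulVec_left, Matrix.mulVec_mulVec, hb, ← hb, dotProduct_comm]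
        have h3' : (A *ᵥ y) ⬝ᵥ R *ᵥ (A *ᵥ y) = y ⬝ᵥ (Aᵀ * R * A) *ᵥ y := by
          rw [rsf_dot_mulVec_left, Matrix.mulVec_mulVec, Matrix.mulVec_mulVec]
        have e1 : (u - A *ᵥ y) ⬝ᵥ R *ᵥ (u - A *ᵥ y)
            = u ⬝ᵥ R *ᵥ u - 2 * (b ⬝ᵥ y) + y ⬝ᵥ (Aᵀ * R * A) *ᵥ y := by
          rw [Matrix.mulVec_sub, sub_dotProduct, dotProduct_sub,
            dotProduct_sub, h1', h2', h3']
          ring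
        have e2 : y ⬝ᵥ M *ᵥ y
            = y ⬝ᵥ (Aᵀ * R * A) *ᵥ y + (y ⬝ᵥ Sig⁻¹ *ᵥ y - (2 * μ) * (y ⬝ᵥ y)) := by
          rw [hMdef, Matrix.add_mulVec, dotProduct_add, hTdef, Matrix.sub_mulVec,
            dotProduct_sub, Matrix.smul_mulVec, Matrix.one_mulVec,
            dotProduct_smul, smul_eq_mul]
        rw [e1, e2]
        ring
    _ = Real.exp (-(1/2) * (u ⬝ᵥ R *ᵥ u))
          * ((∫ y : Fin n → ℝ, Real.exp (-(1/2) * (y ⬝ᵥ M *ᵥ y)))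
              * Real.exp ((1/2) * (b ⬝ᵥ M⁻¹ *ᵥ b))) := by
        rw [integral_const_mul, rsf_gauss_shift hMpos hMs b]
    _ = (∫ y : Fin n → ℝ, Real.exp (-(1/2) * (y ⬝ᵥ M *ᵥ y)))
          * Real.exp (-(1/2) * (u ⬝ᵥ (A * T⁻¹ * Aᵀ + Q)⁻¹ *ᵥ u)) := by
        rw [mul_left_comm, ← Real.exp_add]
        congr 2
        rw [e4, e3]
        ring
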